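/- Let a ∈ ℝ and let B be a real number with m((x,∞))·(S(x) − S(a)) ≤ B for all x ≥ a. Then for every measurable function f : ℝ → [0,∞] and every x > a, J(Kf)(x) ≤ B·(Kf(x) + Jf(x)). -/

import Mathlib

open MeasureTheory Set
open scoped ENNReal

/-- The operator `J`: `Jf(x) = (S(x) − S(a)) · ∫_{(x,∞)} f dm`. -/
noncomputable def Jop (S : ℝ → ℝ) (m : Measure ℝ) (a : ℝ) (f : ℝ → ℝ≥0∞) : ℝ → ℝ≥0∞ :=
  fun x => ENNReal.ofReal (S x - S a) * ∫⁻ y in Ioi x, f y ∂m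

/-- The operator `K`: `Kf(x) = ∫_{(a,x]} (S(y) − S(a)) f(y) dm(y)`. -/
noncomputable def Kop (S : ℝ → ℝ) (m : Measure ℝ) (a : ℝ) (f : ℝ → ℝ≥0∞) : ℝ → ℝ≥0∞ :=
  fun x => ∫⁻ y in Ioc a x, ENNReal.ofReal (S y - S a) * f y ∂m

/-- If `m((x,∞))·(S(x) − S(a)) ≤ B` for all `x ≥ a`, then for every
measurable `f : ℝ → [0,∞]` and every `x > a`, `J(Kf)(x) ≤ B·(Kf(x) + Jf(x))`. -/
theorem JK_le_B_KplusJ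
    (S : ℝ → ℝ) (hScont : Continuous S) (hSmono : StrictMono S)
    (m : Measure ℝ) [IsFiniteMeasure m]
    (a B : ℝ)
    (hB : ∀ x : ℝ, a ≤ x → m (Ioi x) * ENNReal.ofReal (S x - S a) ≤ ENNReal.ofReal B)
    (f : ℝ → ℝ≥0∞) (hf : Measurable f) :
    ∀ x : ℝ, a < x →
      Jop S m a (Kop S m a f) x ≤
        ENNReal.ofReal B * (Kop S m a f x + Jop S m a f x) := by
  intro x hx
  have hax : a ≤ x := hx.le
  set h : ℝ → ℝ≥0∞ := fun y => ENNReal.ofReal (S y - S a) * f y with hh_def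
  have hSm : Measurable S := hScont.measurable
  have hh : Measurable h :=
    (ENNReal.measurable_ofReal.comp (hSm.sub measurable_const)).mul hf
  -- key bound with closed half-line
  have key : ∀ y : ℝ, a < y → m (Ici y) * ENNReal.ofReal (S y - S a) ≤ ENNReal.ofReal B := by
    intro y hy
    have htend : Filter.Tendsto (fun z => m (Ici y) * ENNReal.ofReal (S z - S a))
        (nhdsWithin y (Iio y)) (nhds (m (Ici y) * ENNReal.ofReal (S y - S a))) := by
      apply ENNReal.Tendsto.const_mul
      · exact ((ENNReal.continuous_ofReal.comp (hScont.sub continuous_const)).tendsto y).mono_left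
          nhdsWithin_le_nhds
      · exact Or.inr (measure_ne_top m _)
    refine le_of_tendsto htend ?_
    filter_upwards [Ioo_mem_nhdsLT_of_mem (⟨hy, le_rfl⟩ : y ∈ Ioc a y)] with z hz
    calc m (Ici y) * ENNReal.ofReal (S z - S a)
        ≤ m (Ioi z) * ENNReal.ofReal (S z - S a) :=
          mul_le_mul_left (measure_mono (fun w hw => lt_of_lt_of_le hz.2 hw)) _
      _ ≤ ENNReal.ofReal B := hB z hz.1.le
  -- decomposition of Kop on (x, ∞)
  have hK_decomp : ∀ t ∈ Ioi x, Kop S m a f t = Kop S m a f x + ∫⁻ y in Ioc x t, h y ∂m := by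
    intro t ht
    have hunion : Ioc a x ∪ Ioc x t = Ioc a t := Ioc_union_Ioc_eq_Ioc hax (le_of_lt ht)
    simp only [Kop]
    rw [← hunion, lintegral_union measurableSet_Ioc (Ioc_disjoint_Ioc_of_le le_rfl)]
  have step1 : ∫⁻ t in Ioi x, Kop S m a f t ∂m
      = m (Ioi x) * Kop S m a f x + ∫⁻ t in Ioi x, (∫⁻ y in Ioc x t, h y ∂m) ∂m := by
    rw [setLIntegral_congr_fun measurableSet_Ioi hK_decomp,
      lintegral_add_left measurable_const, setLIntegral_const, mul_comm]
  -- Tonelli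
  have e1 : ∀ t : ℝ, ∫⁻ y in Ioc x t, h y ∂m = ∫⁻ y in Ioi x, (Iic t).indicator h y ∂m := by
    intro t
    rw [lintegral_indicator measurableSet_Iic, Measure.restrict_restrict measurableSet_Iic]
    congr 1
    rw [Set.inter_comm, Set.Ioi_inter_Iic]
  have hmeas : AEMeasurable (Function.uncurry fun t y => (Iic t).indicator h y)
      ((m.restrict (Ioi x)).prod (m.restrict (Ioi x))) := by
    have heq : (Function.uncurry fun t y => (Iic t).indicator h y)
        = ({p : ℝ × ℝ | p.2 ≤ p.1}).indicator (fun p => h p.2) := by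
      ext p
      simp only [Function.uncurry, Set.indicator_apply, mem_Iic, mem_setOf_eq]
    rw [heq]
    exact ((hh.comp measurable_snd).indicator
      (measurableSet_le measurable_snd measurable_fst)).aemeasurable
  have swap : ∫⁻ t in Ioi x, (∫⁻ y in Ioc x t, h y ∂m) ∂m
      = ∫⁻ y in Ioi x, h y * m (Ici y ∩ Ioi x) ∂m := by
    calc ∫⁻ t in Ioi x, (∫⁻ y in Ioc x t, h y ∂m) ∂m
        = ∫⁻ t in Ioi x, (∫⁻ y in Ioi x, (Iic t).indicator h y ∂m) ∂m := by
          exact lintegral_congr fun t => e1 t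
      _ = ∫⁻ y in Ioi x, (∫⁻ t in Ioi x, (Iic t).indicator h y ∂m) ∂m :=
          lintegral_lintegral_swap hmeas
      _ = ∫⁻ y in Ioi x, h y * m (Ici y ∩ Ioi x) ∂m := by
          refine lintegral_congr fun y => ?_
          have : ∀ t : ℝ, (Iic t).indicator h y = (Ici y).indicator (fun _ => h y) t := by
            intro t
            simp only [Set.indicator_apply, mem_Iic, mem_Ici]
          rw [lintegral_congr this, lintegral_indicator measurableSet_Ici,
            Measure.restrict_restrict measurableSet_Ici, setLIntegral_const]
  -- bound the swapped integral
  have bound : ∫⁻ y in Ioi x, h y * m (Ici y ∩ Ioi x) ∂m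
      ≤ ENNReal.ofReal B * ∫⁻ y in Ioi x, f y ∂m := by
    rw [← lintegral_const_mul _ hf]
    refine setLIntegral_mono' measurableSet_Ioi fun y hy => ?_
    calc h y * m (Ici y ∩ Ioi x) ≤ h y * m (Ici y) := by
          gcongr
          exact inter_subset_left
      _ = f y * (m (Ici y) * ENNReal.ofReal (S y - S a)) := by
          simp only [hh_def]; ring
      _ ≤ f y * ENNReal.ofReal B := by
          gcongr
          exact key y (hx.trans hy)
      _ = ENNReal.ofReal B * f y := mul_comm _ _
  -- assemble
  have hJK : Jop S m a (Kop S m a f) x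
      = ENNReal.ofReal (S x - S a) * m (Ioi x) * Kop S m a f x
        + ENNReal.ofReal (S x - S a) * ∫⁻ t in Ioi x, (∫⁻ y in Ioc x t, h y ∂m) ∂m := by
    simp only [Jop]
    rw [step1]
    ring
  rw [hJK, mul_add]
  refine add_le_add ?_ ?_
  · exact mul_le_mul_left (by rw [mul_comm]; exact hB x hax) _
  · calc ENNReal.ofReal (S x - S a) * ∫⁻ t in Ioi x, (∫⁻ y in Ioc x t, h y ∂m) ∂m
        ≤ ENNReal.ofReal (S x - S a) * (ENNReal.ofReal B * ∫⁻ y in Ioi x, f y ∂m) :=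
          mul_le_mul_right (swap.trans_le bound) _
      _ = ENNReal.ofReal B * Jop S m a f x := by
          simp only [Jop]; ring
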